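/- Let φ denote the ReLU function applied entrywise. Fix X ∈ ℝ^{d×n} and suppose (W, U, a) and (W', U', a') satisfy ‖W‖₂, ‖W'‖₂ ≤ ρ̄_w < 1, ‖U‖₂, ‖U'‖₂ ≤ ρ̄_u, and ‖a‖₂, ‖a'‖₂ ≤ ρ̄_a. Let Z = φ(W Z + U X) and Z' = φ(W' Z' + U' X) be the corresponding equilibrium points and set ŷ = Zᵀa, ŷ' = (Z')ᵀa'. Then, with c_w = ρ̄_u ρ̄_a/(1−ρ̄_w)², c_u = ρ̄_a/(1−ρ̄_w), c_a = ρ̄_u/(1−ρ̄_w), ‖ŷ − ŷ'‖₂ ≤ ( c_w ‖W − W'‖₂ + c_u ‖U − U'‖₂ + c_a ‖a − a'‖₂ ) ‖X‖_F. -/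

import Mathlib

open scoped BigOperators Matrix Kronecker
open MeasureTheory ProbabilityTheory Filter

noncomputable section

/-- ReLU on reals. -/
def relu (x : ℝ) : ℝ := max x 0

/-- Entrywise ReLU on matrices. -/
def reluM {α β : Type*} (A : Matrix α β ℝ) : Matrix α β ℝ :=
  Matrix.of fun i j => relu (A i j)

/-- Frobenius norm of a matrix. -/
def frobNorm {α β : Type*} [Fintype α] [Fintype β] (A : Matrix α β ℝ) : ℝ :=
  Real.sqrt (∑ i, ∑ j, (A i j) ^ 2)

/-- Euclidean norm of a vector. -/
def euclNorm {α : Type*} [Fintype α] (v : α → ℝ) : ℝ :=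
  Real.sqrt (∑ i, (v i) ^ 2)

/-- Operator (spectral) norm of a real matrix. -/
def opNorm {α β : Type*} [Fintype α] [Fintype β] [DecidableEq β]
    (A : Matrix α β ℝ) : ℝ :=
  ‖(LinearMap.toContinuousLinearMap (Matrix.toEuclideanLin A))‖

/-- Least eigenvalue of a square matrix, as the infimum of the Rayleigh
quotient over the unit sphere. -/
def lamMin {n : ℕ} (A : Matrix (Fin n) (Fin n) ℝ) : ℝ :=
  ⨅ v : {v : Fin n → ℝ // ∑ i, (v i) ^ 2 = 1}, ∑ i, A.mulVec v.1 i * v.1 i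

/-- The dual activation `Q(x) = (√(1-x²) + (π - arccos x)·x)/π` of ReLU. -/
def Qf (x : ℝ) : ℝ := (Real.sqrt (1 - x ^ 2) + (Real.pi - Real.arccos x) * x) / Real.pi

/-- Expectation of `φ(u)·φ(v)` for `(u,v)` a centered Gaussian vector with
covariance `[[a, c], [c, b]]`, written via the representation `u = √a·g₁`,
`v = (c/√a)·g₁ + √(b - c²/a)·g₂` with `g₁, g₂` i.i.d. standard Gaussians. -/
def gaussRelu2 (a b c : ℝ) : ℝ :=
  ∫ p : ℝ × ℝ, relu (Real.sqrt a * p.1) *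
      relu (c / Real.sqrt a * p.1 + Real.sqrt (b - c ^ 2 / a) * p.2)
    ∂((gaussianReal 0 1).prod (gaussianReal 0 1))

/-- The population Gram matrices `K^{(l)}`, defined recursively from the
pairwise input correlations `c i j = xᵢᵀxⱼ/d`:  `K^{(0)} = 0` and
`K^{(l)}_{ij} = 2·E[φ(u)φ(v)]` for `(u,v) ~ N(0, Λ^{(l)}_{ij})`. -/
def popGram {n : ℕ} (sw2 : ℝ) (c : Fin n → Fin n → ℝ) : ℕ → Matrix (Fin n) (Fin n) ℝ
  | 0 => 0
  | l + 1 => Matrix.of fun i j =>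
      2 * gaussRelu2 (sw2 * popGram sw2 c l i i + 1) (sw2 * popGram sw2 c l j j + 1)
        (sw2 * popGram sw2 c l i j + c i j)

/-- The iterates `Z^{(0)} = 0`, `Z^{(l+1)} = φ(W Z^{(l)} + U X)`. -/
def Zit {m d n : ℕ} (W : Matrix (Fin m) (Fin m) ℝ) (U : Matrix (Fin m) (Fin d) ℝ)
    (X : Matrix (Fin d) (Fin n) ℝ) : ℕ → Matrix (Fin m) (Fin n) ℝ
  | 0 => 0
  | l + 1 => reluM (W * Zit W U X l + U * X)

end

noncomputable section

section Helpers
variable {α β : Type*} [Fintype α] [Fintype β]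

lemma euclNorm_eq_norm (v : α → ℝ) :
    euclNorm v = ‖(WithLp.equiv 2 (α → ℝ)).symm v‖ := by
  rw [EuclideanSpace.norm_eq]
  simp [euclNorm, Real.norm_eq_abs, sq_abs]

lemma euclNorm_nonneg (v : α → ℝ) : 0 ≤ euclNorm v := Real.sqrt_nonneg _

lemma euclNorm_add_le (u v : α → ℝ) :
    euclNorm (u + v) ≤ euclNorm u + euclNorm v := by
  simp only [euclNorm_eq_norm]
  have : (WithLp.equiv 2 (α → ℝ)).symm (u + v)
      = (WithLp.equiv 2 (α → ℝ)).symm u + (WithLp.equiv 2 (α → ℝ)).symm v := rfl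
  rw [this]; exact norm_add_le _ _

lemma frobNorm_eq_euclNorm (A : Matrix α β ℝ) :
    frobNorm A = euclNorm (fun p : α × β => A p.1 p.2) := by
  simp [frobNorm, euclNorm, Fintype.sum_prod_type]

lemma frobNorm_nonneg (A : Matrix α β ℝ) : 0 ≤ frobNorm A := Real.sqrt_nonneg _

lemma frobNorm_add_le (A B : Matrix α β ℝ) :
    frobNorm (A + B) ≤ frobNorm A + frobNorm B := by
  simp only [frobNorm_eq_euclNorm]
  exact euclNorm_add_le (fun p : α × β => A p.1 p.2) (fun p => B p.1 p.2)

lemma opNorm_nonneg [DecidableEq β] (A : Matrix α β ℝ) : 0 ≤ opNorm A := norm_nonneg _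

lemma euclNorm_mulVec_le [DecidableEq β] (A : Matrix α β ℝ) (v : β → ℝ) :
    euclNorm (A.mulVec v) ≤ opNorm A * euclNorm v := by
  simp only [euclNorm_eq_norm]
  have h := (LinearMap.toContinuousLinearMap (Matrix.toEuclideanLin A)).le_opNorm
    ((WithLp.equiv 2 (β → ℝ)).symm v)
  simpa [opNorm] using h

-- frobNorm via columns
lemma frobNorm_sq (A : Matrix α β ℝ) :
    frobNorm A ^ 2 = ∑ j, euclNorm (fun i => A i j) ^ 2 := by
  have h : ∀ j, euclNorm (fun i => A i j) ^ 2 = ∑ i, (A i j) ^ 2 := by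
    intro j
    exact Real.sq_sqrt (Finset.sum_nonneg fun i _ => sq_nonneg _)
  simp only [h, frobNorm]
  rw [Real.sq_sqrt (by positivity)]
  exact Finset.sum_comm

lemma frobNorm_le_of_sq_le (A : Matrix α β ℝ) (c : ℝ) (hc : 0 ≤ c)
    (h : frobNorm A ^ 2 ≤ c ^ 2) : frobNorm A ≤ c :=
  (pow_le_pow_iff_left₀ (frobNorm_nonneg A) hc (by norm_num)).mp h

lemma frobNorm_mul_le [DecidableEq β] {γ : Type*} [Fintype γ] (A : Matrix α β ℝ)
    (B : Matrix β γ ℝ) : frobNorm (A * B) ≤ opNorm A * frobNorm B := by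
  refine frobNorm_le_of_sq_le _ _ (mul_nonneg (opNorm_nonneg A) (frobNorm_nonneg B)) ?_
  rw [mul_pow, frobNorm_sq, frobNorm_sq, Finset.mul_sum]
  refine Finset.sum_le_sum fun j _ => ?_
  have h1 : (fun i => (A * B) i j) = A.mulVec (fun i => B i j) := by
    funext i; simp [Matrix.mul_apply, Matrix.mulVec, dotProduct]
  rw [h1]
  have h2 := euclNorm_mulVec_le A (fun i => B i j)
  have := mul_self_le_mul_self (euclNorm_nonneg _) h2
  calc euclNorm (A.mulVec fun i => B i j) ^ 2
      ≤ (opNorm A * euclNorm fun i => B i j) ^ 2 := by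
        rw [sq, sq]; exact this
    _ = opNorm A ^ 2 * euclNorm (fun i => B i j) ^ 2 := by ring

lemma abs_relu_sub (x y : ℝ) : |relu x - relu y| ≤ |x - y| :=
  abs_max_sub_max_le_abs x y 0

lemma frobNorm_reluM_sub (A B : Matrix α β ℝ) :
    frobNorm (reluM A - reluM B) ≤ frobNorm (A - B) := by
  unfold frobNorm
  apply Real.sqrt_le_sqrt
  refine Finset.sum_le_sum fun i _ => Finset.sum_le_sum fun j _ => ?_
  have := abs_relu_sub (A i j) (B i j)
  calc ((reluM A - reluM B) i j) ^ 2 = |relu (A i j) - relu (B i j)| ^ 2 := by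
        rw [sq_abs]; simp [reluM]
    _ ≤ |A i j - B i j| ^ 2 := by
        apply pow_le_pow_left₀ (abs_nonneg _) this
    _ = ((A - B) i j) ^ 2 := by rw [sq_abs]; simp

lemma euclNorm_transpose_mulVec_le (A : Matrix α β ℝ) (v : α → ℝ) :
    euclNorm (Aᵀ.mulVec v) ≤ frobNorm A * euclNorm v := by
  have hfs : ∀ j, (Aᵀ.mulVec v j) ^ 2 ≤ (∑ i, (A i j) ^ 2) * (∑ i, (v i) ^ 2) := by
    intro j
    have : Aᵀ.mulVec v j = ∑ i, A i j * v i := by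
      simp [Matrix.mulVec, dotProduct, Matrix.transpose_apply]
    rw [this]
    exact Finset.sum_mul_sq_le_sq_mul_sq Finset.univ _ _
  unfold euclNorm frobNorm
  rw [← Real.sqrt_mul (by positivity)]
  apply Real.sqrt_le_sqrt
  calc ∑ j, (Aᵀ.mulVec v j) ^ 2 ≤ ∑ j, (∑ i, (A i j) ^ 2) * (∑ i, (v i) ^ 2) :=
        Finset.sum_le_sum fun j _ => hfs j
    _ = (∑ i, ∑ j, (A i j) ^ 2) * (∑ i, (v i) ^ 2) := by
        rw [← Finset.sum_mul, Finset.sum_comm]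

lemma reluM_zero {α β : Type*} : reluM (0 : Matrix α β ℝ) = 0 := by
  funext i j; simp [reluM, relu]

lemma frobNorm_reluM_le (A : Matrix α β ℝ) : frobNorm (reluM A) ≤ frobNorm A := by
  have h := frobNorm_reluM_sub A (0 : Matrix α β ℝ)
  simpa [reluM_zero] using h

end Helpers

/-- Lipschitz dependence of the prediction `ŷ = Zᵀa` on the
parameters: `‖ŷ - ŷ'‖₂ ≤ (c_w ‖W-W'‖₂ + c_u ‖U-U'‖₂ + c_a ‖a-a'‖₂) ‖X‖_F`. -/
theorem prediction_lipschitz_in_parameters {m d n : ℕ}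
    (X : Matrix (Fin d) (Fin n) ℝ)
    (W W' : Matrix (Fin m) (Fin m) ℝ) (U U' : Matrix (Fin m) (Fin d) ℝ)
    (a a' : Fin m → ℝ) (ρw ρu ρa : ℝ)
    (hW : opNorm W ≤ ρw) (hW' : opNorm W' ≤ ρw) (hρw : ρw < 1)
    (hU : opNorm U ≤ ρu) (hU' : opNorm U' ≤ ρu)
    (ha : euclNorm a ≤ ρa) (ha' : euclNorm a' ≤ ρa)
    (Z Z' : Matrix (Fin m) (Fin n) ℝ)
    (hZ : Z = reluM (W * Z + U * X)) (hZ' : Z' = reluM (W' * Z' + U' * X))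
    (cw cu ca : ℝ) (hcw : cw = ρu * ρa / (1 - ρw) ^ 2)
    (hcu : cu = ρa / (1 - ρw)) (hca : ca = ρu / (1 - ρw)) :
    euclNorm (Zᵀ.mulVec a - Z'ᵀ.mulVec a') ≤
      (cw * opNorm (W - W') + cu * opNorm (U - U') + ca * euclNorm (a - a')) *
        frobNorm X := by
  have hρw0 : 0 ≤ ρw := (opNorm_nonneg W).trans hW
  have hρu0 : 0 ≤ ρu := (opNorm_nonneg U).trans hU
  have hρa0 : 0 ≤ ρa := (euclNorm_nonneg a).trans ha
  have h1 : (0:ℝ) < 1 - ρw := by linarith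
  set XF := frobNorm X with hXF
  have hXF0 : 0 ≤ XF := frobNorm_nonneg X
  set w := opNorm (W - W') with hw
  set u := opNorm (U - U') with hu
  set av := euclNorm (a - a') with hav
  have hw0 : 0 ≤ w := opNorm_nonneg _
  have hu0 : 0 ≤ u := opNorm_nonneg _
  have hav0 : 0 ≤ av := euclNorm_nonneg _
  -- Step A : bound on ‖Z'‖_F
  have hZ'b : frobNorm Z' ≤ ρw * frobNorm Z' + ρu * XF := by
    conv_lhs => rw [hZ']
    calc frobNorm (reluM (W' * Z' + U' * X)) ≤ frobNorm (W' * Z' + U' * X) :=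
          frobNorm_reluM_le _
      _ ≤ frobNorm (W' * Z') + frobNorm (U' * X) := frobNorm_add_le _ _
      _ ≤ opNorm W' * frobNorm Z' + opNorm U' * frobNorm X :=
          add_le_add (frobNorm_mul_le _ _) (frobNorm_mul_le _ _)
      _ ≤ ρw * frobNorm Z' + ρu * XF :=
          add_le_add (mul_le_mul_of_nonneg_right hW' (frobNorm_nonneg Z'))
            (mul_le_mul_of_nonneg_right hU' hXF0)
  have hZ'F : frobNorm Z' ≤ ρu * XF / (1 - ρw) := by
    rw [le_div_iff₀ h1]; nlinarith
  -- Step B : bound on ‖Z - Z'‖_F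
  have hDb : frobNorm (Z - Z') ≤ ρw * frobNorm (Z - Z') + (w * frobNorm Z' + u * XF) := by
    conv_lhs => rw [hZ, hZ']
    calc frobNorm (reluM (W * Z + U * X) - reluM (W' * Z' + U' * X))
        ≤ frobNorm (W * Z + U * X - (W' * Z' + U' * X)) := frobNorm_reluM_sub _ _
      _ = frobNorm (W * (Z - Z') + ((W - W') * Z' + (U - U') * X)) := by
          congr 1
          rw [Matrix.mul_sub, Matrix.sub_mul, Matrix.sub_mul]
          abel
      _ ≤ frobNorm (W * (Z - Z')) + frobNorm ((W - W') * Z' + (U - U') * X) :=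
          frobNorm_add_le _ _
      _ ≤ frobNorm (W * (Z - Z')) + (frobNorm ((W - W') * Z') + frobNorm ((U - U') * X)) := by
          gcongr; exact frobNorm_add_le _ _
      _ ≤ opNorm W * frobNorm (Z - Z') + (w * frobNorm Z' + u * XF) := by
          gcongr <;> first
            | exact frobNorm_mul_le _ _
            | exact le_rfl
      _ ≤ ρw * frobNorm (Z - Z') + (w * frobNorm Z' + u * XF) := by
          gcongr; exact frobNorm_nonneg _
  have hD : frobNorm (Z - Z') ≤ (w * (ρu * XF / (1 - ρw)) + u * XF) / (1 - ρw) := by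
    rw [le_div_iff₀ h1]
    nlinarith [mul_le_mul_of_nonneg_left hZ'F hw0]
  -- Step C : decomposition of the prediction difference
  have hy : Zᵀ.mulVec a - Z'ᵀ.mulVec a' = (Z - Z')ᵀ.mulVec a + Z'ᵀ.mulVec (a - a') := by
    rw [Matrix.transpose_sub, Matrix.sub_mulVec, Matrix.mulVec_sub]
    abel
  calc euclNorm (Zᵀ.mulVec a - Z'ᵀ.mulVec a')
      = euclNorm ((Z - Z')ᵀ.mulVec a + Z'ᵀ.mulVec (a - a')) := by rw [hy]
    _ ≤ euclNorm ((Z - Z')ᵀ.mulVec a) + euclNorm (Z'ᵀ.mulVec (a - a')) :=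
        euclNorm_add_le _ _
    _ ≤ frobNorm (Z - Z') * ρa + frobNorm Z' * av := by
        refine add_le_add ?_ ?_
        · exact (euclNorm_transpose_mulVec_le _ _).trans
            (mul_le_mul_of_nonneg_left ha (frobNorm_nonneg _))
        · exact euclNorm_transpose_mulVec_le _ _
    _ ≤ ((w * (ρu * XF / (1 - ρw)) + u * XF) / (1 - ρw)) * ρa + (ρu * XF / (1 - ρw)) * av := by
        gcongr
    _ = (cw * w + cu * u + ca * av) * XF := by
        rw [hcw, hcu, hca]
        field_simp

end
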